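/- Let n, k, i be integers with i ≥ 1, i ≤ k and 2k ≤ n. Then the polynomial f_{(n−k,k),i}(q) is symmetric with central degree ni/2; that is, q^{ni}·f_{(n−k,k),i}(1/q) = f_{(n−k,k),i}(q). In particular, for fixed n and i, all the polynomials f_{(n−k,k),i}(q) with i ≤ k ≤ n/2 have the same central degree ni/2. -/

import Mathlib

open Polynomial
open scoped Classical

noncomputable section

/-- The set of cells of the skew shape `outer \ inner`, where `outer` and `inner` are
lists of row lengths (rows and columns are 0-indexed): the cell `(r, c)` is present
iff `inner.getD r 0 ≤ c < outer.getD r 0`. -/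
def skewCells (outer inner : List ℕ) : Finset (ℕ × ℕ) :=
  ((Finset.range outer.length) ×ˢ (Finset.range (outer.foldr max 0))).filter
    (fun p => inner.getD p.1 0 ≤ p.2 ∧ p.2 < outer.getD p.1 0)

/-- `pos` encodes a standard Young tableau of skew shape `outer \ inner`:
`pos k` is the cell containing the entry `k + 1`.  The conditions say that the
entries are a bijective filling which increases left to right along rows and
top to bottom down columns. -/
def IsSYT (outer inner : List ℕ)
    (pos : Fin (skewCells outer inner).card → ↥(skewCells outer inner)) : Prop :=
  Function.Injective pos ∧
  (∀ a b, ((pos a : ℕ × ℕ)).1 = ((pos b : ℕ × ℕ)).1 →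
      ((pos a : ℕ × ℕ)).2 < ((pos b : ℕ × ℕ)).2 → a < b) ∧
  (∀ a b, ((pos a : ℕ × ℕ)).2 = ((pos b : ℕ × ℕ)).2 →
      ((pos a : ℕ × ℕ)).1 < ((pos b : ℕ × ℕ)).1 → a < b)

/-- The finite set of standard Young tableaux of skew shape `outer \ inner`. -/
def SYTs (outer inner : List ℕ) :
    Finset (Fin (skewCells outer inner).card → ↥(skewCells outer inner)) :=
  Finset.univ.filter (IsSYT outer inner)

/-- The descent set of the tableau `pos`: the values `v` such that `v + 1` lies in a
strictly lower row than `v` (entry `v` is at index `v - 1`, entry `v+1` at index `v`). -/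
def desSet (outer inner : List ℕ)
    (pos : Fin (skewCells outer inner).card → ↥(skewCells outer inner)) : Finset ℕ :=
  (Finset.range (skewCells outer inner).card).filter
    (fun v => ∃ a b : Fin (skewCells outer inner).card,
      (a : ℕ) + 1 = v ∧ (b : ℕ) = v ∧ ((pos a : ℕ × ℕ)).1 < ((pos b : ℕ × ℕ)).1)

/-- The major index of a tableau: the sum of its descents. -/
def majStat (outer inner : List ℕ)
    (pos : Fin (skewCells outer inner).card → ↥(skewCells outer inner)) : ℕ :=
  (desSet outer inner pos).sum id

/-- The number of descents of a tableau. -/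
def desStat (outer inner : List ℕ)
    (pos : Fin (skewCells outer inner).card → ↥(skewCells outer inner)) : ℕ :=
  (desSet outer inner pos).card

/-- `f_{outer∖inner, i}(q) = Σ_{τ ∈ SYT(outer∖inner), des(τ) = i} q^{maj(τ)} ∈ ℤ[q]`. -/
def fSkew (outer inner : List ℕ) (i : ℕ) : Polynomial ℤ :=
  ∑ pos ∈ (SYTs outer inner).filter (fun pos => desStat outer inner pos = i),
    X ^ majStat outer inner pos

/-- `f_{λ, i}(q)` for a straight (non-skew) shape `λ`. -/
def fPoly (lam : List ℕ) (i : ℕ) : Polynomial ℤ := fSkew lam [] i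

/-- Gaussian binomial coefficients for natural arguments, via the q-Pascal recurrence
`[M+1, N+1]_q = [M, N+1]_q + q^(M-N) [M, N]_q`, with `[M, 0]_q = 1`, `[0, N+1]_q = 0`. -/
def qBinomAux : ℕ → ℕ → Polynomial ℤ
  | _, 0 => 1
  | 0, _ + 1 => 0
  | M + 1, N + 1 => qBinomAux M (N + 1) + X ^ (M - N) * qBinomAux M N

/-- Gaussian binomial coefficient `[M choose N]_q ∈ ℤ[q]`, with the convention that
it is `0` unless `0 ≤ N ≤ M`. -/
def qBinom (M N : ℤ) : Polynomial ℤ :=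
  if 0 ≤ N ∧ N ≤ M then qBinomAux M.toNat N.toNat else 0


/-- lattice path of a 0/1 word: +1 for `false` (top row), -1 for `true` (bottom row). -/
def dpath (w : ℕ → Bool) : ℕ → ℤ
  | 0 => 0
  | m + 1 => dpath w m + (if w m then -1 else 1)

/-- minimum of `dpath w` over `[min p N, N]`. -/
def Mmin (w : ℕ → Bool) (N p : ℕ) : ℤ :=
  (Finset.Icc (min p N) N).inf' (by simp) (dpath w)

def gfun (w : ℕ → Bool) (N p : ℕ) : ℤ :=
  dpath w p + dpath w N - 2 * Mmin w N p

/-- The evacuation-transformed word. -/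
def Tw (w : ℕ → Bool) (N j : ℕ) : Bool :=
  decide (gfun w N (N - j - 1) < gfun w N (N - j))

lemma dpath_succ (w : ℕ → Bool) (m : ℕ) :
    dpath w (m + 1) = dpath w m + (if w m then -1 else 1) := rfl

lemma dstep (w : ℕ → Bool) (m : ℕ) :
    dpath w (m + 1) = dpath w m + 1 ∨ dpath w (m + 1) = dpath w m - 1 := by
  rw [dpath_succ]
  by_cases h : w m
  · rw [if_pos h]; right; omega
  · rw [if_neg h]; left; rfl

lemma Mmin_le {w : ℕ → Bool} {N p : ℕ} (h : p ≤ N) : Mmin w N p ≤ dpath w p := by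
  apply Finset.inf'_le
  simp [Finset.mem_Icc, min_le_left, h, min_eq_left h]

lemma Mmin_le_end (w : ℕ → Bool) (N p : ℕ) : Mmin w N p ≤ dpath w N := by
  apply Finset.inf'_le
  simp [Finset.mem_Icc, min_le_right]

lemma Mmin_nonneg {w : ℕ → Bool} {N : ℕ} (hb : ∀ m ≤ N, 0 ≤ dpath w m) (p : ℕ) :
    0 ≤ Mmin w N p := by
  apply Finset.le_inf'
  intro b hb'
  simp only [Finset.mem_Icc] at hb'
  exact hb b hb'.2

lemma Mmin_mono {w : ℕ → Bool} {N p q : ℕ} (hpq : p ≤ q) (hq : q ≤ N) :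
    Mmin w N p ≤ Mmin w N q := by
  apply Finset.le_inf'
  intro b hb
  apply Finset.inf'_le
  simp only [Finset.mem_Icc] at hb ⊢
  omega

lemma Mmin_rec {w : ℕ → Bool} {N p : ℕ} (h : p < N) :
    Mmin w N p = min (dpath w p) (Mmin w N (p + 1)) := by
  apply le_antisymm
  · exact le_min (Mmin_le h.le) (Mmin_mono (Nat.le_succ p) h)
  · apply Finset.le_inf'
    intro b hbmem
    simp only [Finset.mem_Icc, min_eq_left h.le] at hbmem
    rcases Nat.eq_or_lt_of_le hbmem.1 with hbp | hbp
    · exact le_trans (min_le_left _ _) (le_of_eq (by rw [hbp]))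
    · refine le_trans (min_le_right _ _) (Finset.inf'_le _ ?_)
      simp only [Finset.mem_Icc]
      constructor
      · exact le_trans (min_le_left _ _) hbp
      · exact hbmem.2

lemma Mmin_end (w : ℕ → Bool) (N : ℕ) : Mmin w N N = dpath w N := by
  simp [Mmin]

lemma Mmin_zero {w : ℕ → Bool} {N : ℕ} (hb : ∀ m ≤ N, 0 ≤ dpath w m) :
    Mmin w N 0 = 0 := by
  have h1 : Mmin w N 0 ≤ dpath w 0 := Mmin_le (Nat.zero_le N)
  have h2 : (0:ℤ) ≤ Mmin w N 0 := Mmin_nonneg hb 0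
  have : dpath w 0 = 0 := rfl
  omega

lemma gstep {w : ℕ → Bool} {N p : ℕ} (h : p < N) :
    gfun w N (p + 1) = gfun w N p + 1 ∨ gfun w N (p + 1) = gfun w N p - 1 := by
  have hrec := Mmin_rec (w := w) h
  have hle : Mmin w N (p + 1) ≤ dpath w (p + 1) := Mmin_le h
  have hd := dstep w p
  simp only [gfun]
  rcases le_total (dpath w p) (Mmin w N (p + 1)) with h1 | h1 <;>
    rw [hrec] <;> [rw [min_eq_left h1]; rw [min_eq_right h1]] <;> omega

lemma g_nonneg {w : ℕ → Bool} {N : ℕ} (hb : ∀ m ≤ N, 0 ≤ dpath w m) {p : ℕ} (hp : p ≤ N) :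
    0 ≤ gfun w N p := by
  have h1 := Mmin_le (w := w) hp
  have h2 := Mmin_le_end w N p
  simp only [gfun]; omega

lemma dpath_Tw (w : ℕ → Bool) (N : ℕ) : ∀ m ≤ N, dpath (Tw w N) m = gfun w N (N - m) := by
  intro m
  induction m with
  | zero =>
    intro _
    simp only [Nat.sub_zero, gfun, Mmin_end]
    have h0 : dpath (Tw w N) 0 = 0 := rfl
    rw [h0]; ring
  | succ m ih =>
    intro hm
    have hm' : m < N := hm
    rw [dpath_succ, ih hm'.le]
    have heq : N - m - 1 = N - (m + 1) := by omega
    have heq2 : (N - (m+1)) + 1 = N - m := by omega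
    have hg := gstep (w := w) (N := N) (p := N - (m+1)) (by omega)
    rw [heq2] at hg
    rcases hg with hg | hg <;>
      by_cases hc : gfun w N (N - (m+1)) < gfun w N (N - m) <;>
        simp only [Tw, heq, decide_eq_true_eq] <;>
          [rw [if_pos hc]; rw [if_neg hc]; rw [if_pos hc]; rw [if_neg hc]] <;>
            omega

lemma ballot_Tw {w : ℕ → Bool} {N : ℕ} (hb : ∀ m ≤ N, 0 ≤ dpath w m) :
    ∀ m ≤ N, 0 ≤ dpath (Tw w N) m := by
  intro m hm
  rw [dpath_Tw w N m hm]
  exact g_nonneg hb (by omega)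

lemma dpath_Tw_end {w : ℕ → Bool} {N : ℕ} (hb : ∀ m ≤ N, 0 ≤ dpath w m) :
    dpath (Tw w N) N = dpath w N := by
  rw [dpath_Tw w N N le_rfl]
  simp [gfun, Mmin_zero hb, dpath]

/-- last hitting point of the running minimum -/
lemma hit {w : ℕ → Bool} {N : ℕ} (hb : ∀ m ≤ N, 0 ≤ dpath w m) {m : ℕ} (hm : m ≤ N) :
    ∃ p ≤ m, dpath w p = Mmin w N m ∧ Mmin w N p = Mmin w N m := by
  classical
  obtain ⟨p, hpm, hPp, hgt⟩ :
      ∃ p, p ≤ m ∧ dpath w p ≤ Mmin w N m ∧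
        ∀ l, p < l → l ≤ m → Mmin w N m < dpath w l := by
    refine ⟨Nat.findGreatest (fun p => dpath w p ≤ Mmin w N m) m,
      Nat.findGreatest_le m,
      Nat.findGreatest_spec (P := fun p => dpath w p ≤ Mmin w N m) (Nat.zero_le m) ?_, ?_⟩
    · show dpath w 0 ≤ _
      have h0 : dpath w 0 = 0 := rfl
      rw [h0]
      exact Mmin_nonneg hb m
    · intro l hl hlm
      have := Nat.findGreatest_is_greatest hl hlm
      simpa using this
  have hdp : dpath w p = Mmin w N m := by
    rcases Nat.eq_or_lt_of_le hpm with h | h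
    · subst h
      exact le_antisymm hPp (Mmin_le hm)
    · have h1 := hgt (p + 1) (Nat.lt_succ_self p) h
      have h2 := dstep w p
      omega
  refine ⟨p, hpm, hdp, ?_⟩
  apply le_antisymm (Mmin_mono hpm hm)
  apply Finset.le_inf'
  intro b hbmem
  have hb1 : p ≤ b ∧ b ≤ N := by
    simpa [min_eq_left (show p ≤ N by omega)] using hbmem
  rcases le_or_gt b m with hbm | hbm
  · rcases Nat.eq_or_lt_of_le hb1.1 with h | h
    · exact le_of_eq (by rw [← hdp, h])
    · exact (hgt b h hbm).le
  · refine Finset.inf'_le _ ?_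
    simp only [Finset.mem_Icc]
    constructor
    · exact le_trans (min_le_left _ _) (by omega)
    · exact hb1.2

lemma Mmin_Tw {w : ℕ → Bool} {N : ℕ} (hb : ∀ m ≤ N, 0 ≤ dpath w m) {m : ℕ} (hm : m ≤ N) :
    Mmin (Tw w N) N (N - m) = dpath w N - Mmin w N m := by
  apply le_antisymm
  · obtain ⟨p, hpm, hdp, hMp⟩ := hit hb hm
    have hmem : N - p ∈ Finset.Icc (min (N - m) N) N := by
      simp only [Finset.mem_Icc]; omega
    have := Finset.inf'_le (s := Finset.Icc (min (N - m) N) N) (dpath (Tw w N)) hmem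
    refine le_trans this ?_
    rw [dpath_Tw w N (N - p) (by omega)]
    have : N - (N - p) = p := by omega
    rw [this, gfun, hdp, hMp]
    omega
  · apply Finset.le_inf'
    intro l hl
    simp only [Finset.mem_Icc] at hl
    have hlN : l ≤ N := hl.2
    rw [dpath_Tw w N l hlN]
    have hq : N - l ≤ m := by omega
    have h1 : Mmin w N (N - l) ≤ Mmin w N m := Mmin_mono hq hm
    have h2 := Mmin_le (w := w) (show N - l ≤ N by omega)
    simp only [gfun]
    omega

lemma Tw_invol {w : ℕ → Bool} {N : ℕ} (hb : ∀ m ≤ N, 0 ≤ dpath w m) :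
    ∀ j < N, Tw (Tw w N) N j = w j := by
  intro j hj
  have key : ∀ m ≤ N, gfun (Tw w N) N (N - m) = dpath w m := by
    intro m hm
    rw [gfun, dpath_Tw w N (N - m) (by omega), dpath_Tw_end hb, Mmin_Tw hb hm]
    have : N - (N - m) = m := by omega
    rw [this, gfun]
    omega
  have h1 : N - j - 1 = N - (j + 1) := by omega
  rw [show Tw (Tw w N) N j
      = decide (gfun (Tw w N) N (N - j - 1) < gfun (Tw w N) N (N - j)) from rfl]
  rw [h1, key (j + 1) hj, key j hj.le]
  have := dstep w j
  rw [dpath_succ]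
  by_cases h : w j <;> simp [h] <;> omega

/-- descent of `w` at position `v` (1-indexed value `v`, entries at indices `v-1`, `v`). -/
def Des (w : ℕ → Bool) (v : ℕ) : Prop := w (v - 1) = false ∧ w v = true

lemma des_iff_lm (w : ℕ → Bool) (t : ℕ) :
    Des w (t + 1) ↔ (dpath w t < dpath w (t + 1) ∧ dpath w (t + 2) < dpath w (t + 1)) := by
  unfold Des
  simp only [Nat.add_sub_cancel]
  constructor
  · rintro ⟨h1, h2⟩
    have e1 : dpath w (t+1) = dpath w t + 1 := by
      rw [dpath_succ, if_neg (by simp [h1])]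
    have e2 : dpath w (t+2) = dpath w (t+1) - 1 := by
      rw [show t+2 = t+1+1 from rfl, dpath_succ, if_pos h2]; ring
    omega
  · rintro ⟨h1, h2⟩
    constructor
    · by_contra h
      rw [Bool.not_eq_false] at h
      rw [dpath_succ, if_pos h] at h1
      omega
    · by_contra h
      rw [Bool.not_eq_true] at h
      rw [show t + 2 = (t+1) + 1 from rfl, dpath_succ (m := t+1), if_neg (by simp [h])] at h2
      omega

/-- the local max correspondence between `dpath` and `gfun`. -/
lemma lm_corr {w : ℕ → Bool} {N u : ℕ} (hu : u + 2 ≤ N) :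
    ((dpath w u < dpath w (u+1) ∧ dpath w (u+2) < dpath w (u+1)) ↔
     (gfun w N u < gfun w N (u+1) ∧ gfun w N (u+2) < gfun w N (u+1))) := by
  have hrec1 := Mmin_rec (w := w) (show u < N by omega)
  have hrec2 := Mmin_rec (w := w) (show u + 1 < N by omega)
  have hle2 : Mmin w N (u+2) ≤ dpath w (u+2) := Mmin_le (by omega)
  have hd1 := dstep w u
  have hd2 := dstep w (u+1)
  simp only [gfun]
  have e1 : u + 1 + 1 = u + 2 := rfl
  rw [e1] at hrec2 hd2
  rcases le_total (dpath w u) (Mmin w N (u+1)) with h1 | h1 <;>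
    rcases le_total (dpath w (u+1)) (Mmin w N (u+2)) with h2 | h2 <;>
      rw [hrec1, hrec2] <;>
      [skip; skip; skip; skip] <;>
      simp only [min_def] <;> split <;> split <;> omega

/-- Descents of the transformed word. -/
lemma des_Tw {w : ℕ → Bool} {N : ℕ} (hb : ∀ m ≤ N, 0 ≤ dpath w m) {u : ℕ}
    (hu1 : 1 ≤ u) (hu2 : u + 1 ≤ N) :
    (Des (Tw w N) u ↔ Des w (N - u)) := by
  obtain ⟨t, rfl⟩ : ∃ t, u = t + 1 := ⟨u - 1, by omega⟩
  rw [des_iff_lm]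
  rw [dpath_Tw w N t (by omega), dpath_Tw w N (t+1) (by omega), dpath_Tw w N (t+2) (by omega)]
  obtain ⟨s, hs⟩ : ∃ s, N - (t + 1) = s + 1 := ⟨N - t - 2, by omega⟩
  have e1 : N - t = s + 2 := by omega
  have e2 : N - (t + 2) = s := by omega
  rw [hs, e1, e2]
  rw [des_iff_lm]
  have hc := lm_corr (w := w) (N := N) (u := s) (by omega)
  tauto

/-- congruence: `Tw` only depends on the word below `N`. -/
lemma dpath_congr {w1 w2 : ℕ → Bool} {N : ℕ} (h : ∀ l < N, w1 l = w2 l) :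
    ∀ m ≤ N, dpath w1 m = dpath w2 m := by
  intro m
  induction m with
  | zero => intro _; rfl
  | succ m ih =>
    intro hm
    rw [dpath_succ, dpath_succ, ih (by omega), h m (by omega)]

lemma Tw_congr {w1 w2 : ℕ → Bool} {N : ℕ} (h : ∀ l < N, w1 l = w2 l) (j : ℕ) :
    Tw w1 N j = Tw w2 N j := by
  have hd := dpath_congr h
  have hM : ∀ p, Mmin w1 N p = Mmin w2 N p := by
    intro p
    unfold Mmin
    apply Finset.inf'_congr _ rfl
    intro x hx
    simp only [Finset.mem_Icc] at hx
    exact hd x hx.2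
  have hg : ∀ p ≤ N, gfun w1 N p = gfun w2 N p := by
    intro p hp
    simp only [gfun, hd p hp, hd N le_rfl, hM]
  unfold Tw
  rw [hg _ (by omega), hg _ (by omega)]

/-! ### counting helpers -/

def cntw (w : ℕ → Bool) (b : Bool) (m : ℕ) : ℕ :=
  ((Finset.range m).filter (fun l => w l = b)).card

lemma cntw_succ (w : ℕ → Bool) (b : Bool) (m : ℕ) :
    cntw w b (m + 1) = cntw w b m + if w m = b then 1 else 0 := by
  unfold cntw
  rw [Finset.range_add_one, Finset.filter_insert]
  split
  · rw [Finset.card_insert_of_notMem (by simp)]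
  · simp

lemma cntw_mono (w : ℕ → Bool) (b : Bool) {a c : ℕ} (h : a ≤ c) :
    cntw w b a ≤ cntw w b c :=
  Finset.card_le_card (Finset.filter_subset_filter _ (Finset.range_subset_range.2 h))

lemma cntw_strict (w : ℕ → Bool) {b : Bool} {l m : ℕ} (hw : w l = b) (hlm : l < m) :
    cntw w b l < cntw w b m := by
  have h1 : cntw w b (l + 1) = cntw w b l + 1 := by rw [cntw_succ, if_pos hw]
  have h2 : cntw w b (l + 1) ≤ cntw w b m := cntw_mono w b hlm
  omega

lemma cntw_total (w : ℕ → Bool) (m : ℕ) : cntw w false m + cntw w true m = m := by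
  induction m with
  | zero => rfl
  | succ m ih =>
    rw [cntw_succ, cntw_succ]
    cases h : w m <;> simp [h] <;> omega

lemma dpath_cnt (w : ℕ → Bool) (m : ℕ) :
    dpath w m = (cntw w false m : ℤ) - (cntw w true m : ℤ) := by
  induction m with
  | zero => rfl
  | succ m ih =>
    rw [dpath_succ, cntw_succ, cntw_succ, ih]
    cases h : w m <;> simp [h] <;> push_cast <;> ring

lemma cntw_congr {w1 w2 : ℕ → Bool} {m : ℕ} (h : ∀ l < m, w1 l = w2 l) (b : Bool) :
    cntw w1 b m = cntw w2 b m := by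
  unfold cntw
  congr 1
  apply Finset.filter_congr
  intro x hx
  simp only [Finset.mem_range] at hx
  rw [h x hx]

/-! ### the cells of the two-row shape -/

lemma mem_cells {n k : ℕ} (hkn : 2 * k ≤ n) (p : ℕ × ℕ) :
    p ∈ skewCells [n - k, k] [] ↔ (p.1 = 0 ∧ p.2 < n - k) ∨ (p.1 = 1 ∧ p.2 < k) := by
  obtain ⟨r, c⟩ := p
  simp only [skewCells, Finset.mem_filter, Finset.mem_product, Finset.mem_range,
    List.length_cons, List.length_nil]
  constructor
  · rintro ⟨⟨hr, hc⟩, -, h1⟩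
    interval_cases r
    · exact Or.inl ⟨rfl, by simpa [List.getD] using h1⟩
    · exact Or.inr ⟨rfl, by simpa [List.getD] using h1⟩
  · rintro (⟨rfl, hc⟩ | ⟨rfl, hc⟩)
    · refine ⟨⟨by omega, ?_⟩, by simp [List.getD], by simpa [List.getD] using hc⟩
      simp only [List.foldr]
      omega
    · refine ⟨⟨by omega, ?_⟩, by simp [List.getD], by simpa [List.getD] using hc⟩
      simp only [List.foldr]
      omega

lemma cells_card {n k : ℕ} (hkn : 2 * k ≤ n) : (skewCells [n - k, k] []).card = n := by
  have h : skewCells [n - k, k] []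
      = ({0} ×ˢ Finset.range (n - k)) ∪ ({1} ×ˢ Finset.range k) := by
    ext p
    rw [mem_cells hkn]
    simp only [Finset.mem_union, Finset.mem_product, Finset.mem_singleton, Finset.mem_range]
  have hdisj : Disjoint (({0} : Finset ℕ) ×ˢ Finset.range (n - k))
      (({1} : Finset ℕ) ×ˢ Finset.range k) := by
    rw [Finset.disjoint_left]
    rintro ⟨r, c⟩ h1 h2
    simp only [Finset.mem_product, Finset.mem_singleton] at h1 h2
    omega
  rw [h, Finset.card_union_of_disjoint hdisj]
  simp only [Finset.card_product, Finset.card_singleton, Finset.card_range]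
  omega

/-! ### from a tableau to a word -/

def wrow (n k : ℕ) (pos : Fin (skewCells [n - k, k] []).card → ↥(skewCells [n - k, k] [])) :
    ℕ → Bool :=
  fun m => if h : m < (skewCells [n - k, k] []).card
    then decide (((pos ⟨m, h⟩ : ℕ × ℕ)).1 = 1) else false

section Tableau

variable {n k : ℕ}
  {pos : Fin (skewCells [n - k, k] []).card → ↥(skewCells [n - k, k] [])}

lemma pos_bij (hS : IsSYT [n - k, k] [] pos) : Function.Bijective pos := by
  rw [Fintype.bijective_iff_injective_and_card]
  exact ⟨hS.1, by simp [Fintype.card_coe]⟩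

lemma row_cases (hkn : 2 * k ≤ n) (j : Fin (skewCells [n - k, k] []).card) :
    (((pos j : ℕ × ℕ)).1 = 0 ∧ ((pos j : ℕ × ℕ)).2 < n - k) ∨
    (((pos j : ℕ × ℕ)).1 = 1 ∧ ((pos j : ℕ × ℕ)).2 < k) := by
  have := (pos j).prop
  rwa [mem_cells hkn] at this

lemma wrow_val (j : Fin (skewCells [n - k, k] []).card) :
    wrow n k pos (j : ℕ) = decide (((pos j : ℕ × ℕ)).1 = 1) := by
  unfold wrow
  rw [dif_pos j.isLt]

lemma row_of_wrow (hkn : 2 * k ≤ n) (j : Fin (skewCells [n - k, k] []).card) :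
    ((pos j : ℕ × ℕ)).1 = if wrow n k pos (j : ℕ) then 1 else 0 := by
  rw [wrow_val]
  rcases row_cases (pos := pos) hkn j with ⟨h1, -⟩ | ⟨h1, -⟩ <;> simp [h1]

/-- count as a cardinality over `Fin N` -/
lemma cnt_as_fin (b : Bool) {m : ℕ} (hm : m ≤ (skewCells [n - k, k] []).card) :
    cntw (wrow n k pos) b m =
      (Finset.univ.filter
        (fun j : Fin (skewCells [n - k, k] []).card =>
          (j : ℕ) < m ∧ wrow n k pos (j : ℕ) = b)).card := by
  unfold cntw
  apply Finset.card_bij (fun l hl => (⟨l, by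
    simp only [Finset.mem_filter, Finset.mem_range] at hl; omega⟩ :
      Fin (skewCells [n - k, k] []).card))
  · intro a ha
    simp only [Finset.mem_filter, Finset.mem_range] at ha ⊢
    exact ⟨Finset.mem_univ _, ha.1, ha.2⟩
  · intro a ha a' ha' h
    simpa using congrArg Fin.val h
  · intro b hb
    simp only [Finset.mem_filter, Finset.mem_univ, true_and] at hb
    exact ⟨(b : ℕ), by simp [Finset.mem_filter, Finset.mem_range, hb.1, hb.2], by simp⟩

lemma ballot_wrow (hkn : 2 * k ≤ n) (hS : IsSYT [n - k, k] [] pos) :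
    ∀ m ≤ (skewCells [n - k, k] []).card, 0 ≤ dpath (wrow n k pos) m := by
  have hinv : ∀ c, pos (Function.surjInv (pos_bij hS).surjective c) = c :=
    Function.rightInverse_surjInv (pos_bij hS).surjective
  intro m hm
  rw [dpath_cnt, cnt_as_fin false hm, cnt_as_fin true hm]
  have hmem : ∀ j : Fin (skewCells [n - k, k] []).card, ((pos j : ℕ × ℕ)).1 = 1 →
      ((0 : ℕ), ((pos j : ℕ × ℕ)).2) ∈ skewCells [n - k, k] [] := by
    intro j hj
    rw [mem_cells hkn]
    rcases row_cases (pos := pos) hkn j with ⟨h1, -⟩ | ⟨-, h2⟩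
    · omega
    · left
      exact ⟨rfl, by omega⟩
  have key : (Finset.univ.filter
        (fun j : Fin (skewCells [n - k, k] []).card =>
          (j : ℕ) < m ∧ wrow n k pos (j : ℕ) = true)).card ≤
      (Finset.univ.filter
        (fun j : Fin (skewCells [n - k, k] []).card =>
          (j : ℕ) < m ∧ wrow n k pos (j : ℕ) = false)).card := by
    apply Finset.card_le_card_of_injOn
      (fun j => if h : ((pos j : ℕ × ℕ)).1 = 1
        then Function.surjInv (pos_bij hS).surjective ⟨(0, ((pos j : ℕ × ℕ)).2), hmem j h⟩
        else j)
    · intro j hj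
      simp only [Finset.mem_coe, Finset.mem_filter, Finset.mem_univ, true_and] at hj
      obtain ⟨hjm, hjw⟩ := hj
      rw [wrow_val] at hjw
      have hrow : ((pos j : ℕ × ℕ)).1 = 1 := by simpa using hjw
      beta_reduce
      rw [dif_pos hrow]
      set j0 := Function.surjInv (pos_bij hS).surjective ⟨(0, ((pos j : ℕ × ℕ)).2), hmem j hrow⟩
        with hj0
      have hp0 : (pos j0 : ℕ × ℕ) = (0, ((pos j : ℕ × ℕ)).2) := by
        rw [hj0, hinv]
      have hlt : j0 < j := by
        apply hS.2.2
        · rw [hp0]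
        · rw [hp0, hrow]
          norm_num
      simp only [Finset.mem_coe, Finset.mem_filter, Finset.mem_univ, true_and]
      constructor
      · have : (j0 : ℕ) < (j : ℕ) := hlt
        omega
      · rw [wrow_val j0, hp0]
        simp
    · intro a ha b hb hab
      simp only [Finset.coe_filter, Finset.mem_univ, true_and, Set.mem_setOf_eq] at ha hb
      have hra : ((pos a : ℕ × ℕ)).1 = 1 := by
        have := ha.2; rw [wrow_val] at this; simpa using this
      have hrb : ((pos b : ℕ × ℕ)).1 = 1 := by
        have := hb.2; rw [wrow_val] at this; simpa using this
      simp only [dif_pos hra, dif_pos hrb] at hab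
      have hpp := congrArg pos hab
      rw [hinv, hinv] at hpp
      have hvv := congrArg Subtype.val hpp
      have hcol : ((pos a : ℕ × ℕ)).2 = ((pos b : ℕ × ℕ)).2 := (Prod.ext_iff.1 hvv).2
      apply hS.1
      apply Subtype.ext
      apply Prod.ext
      · rw [hra, hrb]
      · exact hcol
  omega

lemma cnt_true_total (hkn : 2 * k ≤ n) (hS : IsSYT [n - k, k] [] pos) :
    cntw (wrow n k pos) true (skewCells [n - k, k] []).card = k := by
  have hinv : ∀ c, pos (Function.surjInv (pos_bij hS).surjective c) = c :=
    Function.rightInverse_surjInv (pos_bij hS).surjective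
  rw [cnt_as_fin true le_rfl]
  have hkey : (Finset.univ.filter
        (fun j : Fin (skewCells [n - k, k] []).card =>
          (j : ℕ) < (skewCells [n - k, k] []).card ∧ wrow n k pos (j : ℕ) = true)).card
      = (({1} : Finset ℕ) ×ˢ Finset.range k).card := by
    apply Finset.card_bij (fun j _ => ((pos j : ℕ × ℕ)))
    · intro j hj
      simp only [Finset.mem_filter, Finset.mem_univ, true_and] at hj
      have hrow : ((pos j : ℕ × ℕ)).1 = 1 := by
        have := hj.2; rw [wrow_val] at this; simpa using this
      rcases row_cases (pos := pos) hkn j with ⟨h1, -⟩ | ⟨-, h2⟩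
      · omega
      · simp only [Finset.mem_product, Finset.mem_singleton, Finset.mem_range]
        exact ⟨hrow, h2⟩
    · intro a _ b _ h
      exact hS.1 (Subtype.ext h)
    · intro p hp
      simp only [Finset.mem_product, Finset.mem_singleton, Finset.mem_range] at hp
      have hpC : p ∈ skewCells [n - k, k] [] := by
        rw [mem_cells hkn]; right; exact ⟨hp.1, hp.2⟩
      refine ⟨Function.surjInv (pos_bij hS).surjective ⟨p, hpC⟩, ?_, ?_⟩
      · simp only [Finset.mem_filter, Finset.mem_univ, true_and]
        refine ⟨Fin.isLt _, ?_⟩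
        rw [wrow_val, hinv]
        simpa using hp.1
      · rw [hinv]
  rw [hkey]
  simp

lemma col_eq_cnt (hkn : 2 * k ≤ n) (hS : IsSYT [n - k, k] [] pos)
    (j : Fin (skewCells [n - k, k] []).card) :
    ((pos j : ℕ × ℕ)).2 = cntw (wrow n k pos) (wrow n k pos (j : ℕ)) (j : ℕ) := by
  have hinv : ∀ c, pos (Function.surjInv (pos_bij hS).surjective c) = c :=
    Function.rightInverse_surjInv (pos_bij hS).surjective
  rw [cnt_as_fin _ j.isLt.le]
  have : ((pos j : ℕ × ℕ)).2 = (Finset.range ((pos j : ℕ × ℕ)).2).card := by simp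
  rw [this]
  apply Finset.card_bij (fun c hc => Function.surjInv (pos_bij hS).surjective
    ⟨(((pos j : ℕ × ℕ)).1, c), by
      simp only [Finset.mem_range] at hc
      rw [mem_cells hkn]
      rcases row_cases (pos := pos) hkn j with ⟨h1, h2⟩ | ⟨h1, h2⟩
      · left; exact ⟨h1, by omega⟩
      · right; exact ⟨h1, by omega⟩⟩)
  · intro c hc
    simp only [Finset.mem_range] at hc
    set a := Function.surjInv (pos_bij hS).surjective ⟨(((pos j : ℕ × ℕ)).1, c), _⟩ with ha
    have hpa : (pos a : ℕ × ℕ) = (((pos j : ℕ × ℕ)).1, c) := by rw [ha, hinv]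
    have haj : a < j := by
      apply hS.2.1
      · rw [hpa]
      · rw [hpa]; exact hc
    simp only [Finset.mem_filter, Finset.mem_univ, true_and]
    refine ⟨haj, ?_⟩
    rw [wrow_val, wrow_val, hpa]
  · intro a _ b _ h
    have h1 := congrArg pos h
    rw [hinv, hinv] at h1
    have h2 := congrArg Subtype.val h1
    exact (Prod.ext_iff.1 h2).2
  · intro a ha
    simp only [Finset.mem_filter, Finset.mem_univ, true_and] at ha
    obtain ⟨haj, haw⟩ := ha
    have hrow : ((pos a : ℕ × ℕ)).1 = ((pos j : ℕ × ℕ)).1 := by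
      rw [row_of_wrow hkn, row_of_wrow hkn, haw]
    have hcol : ((pos a : ℕ × ℕ)).2 < ((pos j : ℕ × ℕ)).2 := by
      rcases lt_trichotomy (((pos a : ℕ × ℕ)).2) (((pos j : ℕ × ℕ)).2) with h | h | h
      · exact h
      · exfalso
        have : a = j := hS.1 (Subtype.ext (Prod.ext hrow h))
        subst this
        exact lt_irrefl _ haj
      · exfalso
        have := hS.2.1 j a hrow.symm h
        have h1 : (j : ℕ) < (a : ℕ) := this
        have h2 : (a : ℕ) < (j : ℕ) := haj
        omega
    refine ⟨((pos a : ℕ × ℕ)).2, by simpa using hcol, ?_⟩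
    apply hS.1
    rw [hinv]
    apply Subtype.ext
    apply Prod.ext
    · exact hrow.symm
    · rfl

end Tableau

section Tableau2

variable {n k : ℕ}
  {pos : Fin (skewCells [n - k, k] []).card → ↥(skewCells [n - k, k] [])}

lemma cnt_false_total (hkn : 2 * k ≤ n) (hS : IsSYT [n - k, k] [] pos) :
    cntw (wrow n k pos) false (skewCells [n - k, k] []).card = n - k := by
  have h1 := cntw_total (wrow n k pos) (skewCells [n - k, k] []).card
  have h2 := cnt_true_total hkn hS
  have h3 := cells_card (n := n) (k := k) hkn
  omega

lemma cntTw_true_total (hkn : 2 * k ≤ n) (hS : IsSYT [n - k, k] [] pos) :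
    cntw (Tw (wrow n k pos) (skewCells [n - k, k] []).card) true
      (skewCells [n - k, k] []).card = k := by
  have h0 := dpath_Tw_end (ballot_wrow hkn hS)
  rw [dpath_cnt, dpath_cnt] at h0
  have h1 := cntw_total (wrow n k pos) (skewCells [n - k, k] []).card
  have h2 := cntw_total (Tw (wrow n k pos) (skewCells [n - k, k] []).card)
    (skewCells [n - k, k] []).card
  have h3 := cnt_true_total hkn hS
  omega

lemma cntTw_false_total (hkn : 2 * k ≤ n) (hS : IsSYT [n - k, k] [] pos) :
    cntw (Tw (wrow n k pos) (skewCells [n - k, k] []).card) false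
      (skewCells [n - k, k] []).card = n - k := by
  have h2 := cntw_total (Tw (wrow n k pos) (skewCells [n - k, k] []).card)
    (skewCells [n - k, k] []).card
  have h3 := cntTw_true_total hkn hS
  have h4 := cells_card (n := n) (k := k) hkn
  omega

end Tableau2

/-- The evacuation involution on two-row standard Young tableaux. -/
noncomputable def Phi (n k : ℕ)
    (pos : Fin (skewCells [n - k, k] []).card → ↥(skewCells [n - k, k] []))
    (hkn : 2 * k ≤ n) (hS : IsSYT [n - k, k] [] pos) :
    Fin (skewCells [n - k, k] []).card → ↥(skewCells [n - k, k] []) :=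
  fun j =>
    ⟨((if Tw (wrow n k pos) (skewCells [n - k, k] []).card (j : ℕ) then 1 else 0),
      cntw (Tw (wrow n k pos) (skewCells [n - k, k] []).card)
        (Tw (wrow n k pos) (skewCells [n - k, k] []).card (j : ℕ)) (j : ℕ)), by
      rw [mem_cells hkn]
      by_cases h : Tw (wrow n k pos) (skewCells [n - k, k] []).card (j : ℕ)
      · right
        refine ⟨by rw [if_pos h], ?_⟩
        rw [h]
        calc cntw (Tw (wrow n k pos) (skewCells [n - k, k] []).card) true (j : ℕ)
            < cntw (Tw (wrow n k pos) (skewCells [n - k, k] []).card) true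
                (skewCells [n - k, k] []).card := cntw_strict _ h j.isLt
          _ = k := cntTw_true_total hkn hS
      · left
        refine ⟨by rw [if_neg h], ?_⟩
        rw [Bool.not_eq_true] at h
        rw [h]
        calc cntw (Tw (wrow n k pos) (skewCells [n - k, k] []).card) false (j : ℕ)
            < cntw (Tw (wrow n k pos) (skewCells [n - k, k] []).card) false
                (skewCells [n - k, k] []).card := cntw_strict _ h j.isLt
          _ = n - k := cntTw_false_total hkn hS⟩

section Tableau3

variable {n k : ℕ}
  {pos : Fin (skewCells [n - k, k] []).card → ↥(skewCells [n - k, k] [])}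

lemma wrow_Phi (hkn : 2 * k ≤ n) (hS : IsSYT [n - k, k] [] pos) :
    ∀ l < (skewCells [n - k, k] []).card,
      wrow n k (Phi n k pos hkn hS) l = Tw (wrow n k pos) (skewCells [n - k, k] []).card l := by
  intro l hl
  calc wrow n k (Phi n k pos hkn hS) l
      = decide ((Phi n k pos hkn hS ⟨l, hl⟩ : ℕ × ℕ).1 = 1) := by
        unfold wrow
        rw [dif_pos hl]
    _ = Tw (wrow n k pos) (skewCells [n - k, k] []).card l := by
        have h0 : (Phi n k pos hkn hS ⟨l, hl⟩ : ℕ × ℕ).1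
            = if Tw (wrow n k pos) (skewCells [n - k, k] []).card l then 1 else 0 := rfl
        rw [h0]
        cases h : Tw (wrow n k pos) (skewCells [n - k, k] []).card l <;> simp

lemma Phi_SYT (hkn : 2 * k ≤ n) (hS : IsSYT [n - k, k] [] pos) :
    IsSYT [n - k, k] [] (Phi n k pos hkn hS) := by
  set w' := Tw (wrow n k pos) (skewCells [n - k, k] []).card with hw'
  have hrow : ∀ j : Fin (skewCells [n - k, k] []).card,
      (Phi n k pos hkn hS j : ℕ × ℕ).1 = if w' (j : ℕ) then 1 else 0 :=
    fun _ => rfl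
  have hcol : ∀ j : Fin (skewCells [n - k, k] []).card,
      (Phi n k pos hkn hS j : ℕ × ℕ).2 = cntw w' (w' (j : ℕ)) (j : ℕ) :=
    fun _ => rfl
  have hroweq : ∀ a b : Fin (skewCells [n - k, k] []).card,
      (Phi n k pos hkn hS a : ℕ × ℕ).1 = (Phi n k pos hkn hS b : ℕ × ℕ).1 →
        w' (a : ℕ) = w' (b : ℕ) := by
    intro a b hab
    rw [hrow, hrow] at hab
    cases ha : w' (a : ℕ) <;> cases hb : w' (b : ℕ) <;> simp [ha, hb] at hab ⊢
  refine ⟨?_, ?_, ?_⟩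
  · intro a b hab
    have h1 : w' (a : ℕ) = w' (b : ℕ) := hroweq a b (by rw [hab])
    have h2 : cntw w' (w' (a : ℕ)) (a : ℕ) = cntw w' (w' (b : ℕ)) (b : ℕ) := by
      have h2' := congrArg Subtype.val hab
      have h2'' := congrArg Prod.snd h2'
      rw [hcol, hcol] at h2''
      exact h2''
    rcases lt_trichotomy (a : ℕ) (b : ℕ) with h | h | h
    · exfalso
      have h3 := cntw_strict w' (b := w' (a : ℕ)) rfl h
      rw [h1] at h3 h2
      omega
    · exact Fin.ext h
    · exfalso
      have h3 := cntw_strict w' (b := w' (b : ℕ)) rfl h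
      rw [h1] at h2
      omega
  · intro a b hab hcolab
    have h1 : w' (a : ℕ) = w' (b : ℕ) := hroweq a b hab
    rw [hcol, hcol, h1] at hcolab
    rw [Fin.lt_def]
    by_contra hc
    push_neg at hc
    have := cntw_mono w' (w' (b : ℕ)) hc
    omega
  · intro a b hcolab hrowab
    rw [hrow, hrow] at hrowab
    have hwa : w' (a : ℕ) = false := by
      by_contra h
      rw [Bool.not_eq_false] at h
      rw [h] at hrowab
      by_cases hb : w' (b : ℕ) <;> simp [hb] at hrowab
    have hwb : w' (b : ℕ) = true := by
      by_contra h
      rw [Bool.not_eq_true] at h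
      rw [h, hwa] at hrowab
      simp at hrowab
    rw [hcol, hcol, hwa, hwb] at hcolab
    -- ballot property of w' gives the conclusion
    have hb1 : 0 ≤ dpath w' ((b : ℕ) + 1) :=
      ballot_Tw (ballot_wrow hkn hS) _ (by omega)
    rw [dpath_cnt] at hb1
    have hb2 : cntw w' true ((b : ℕ) + 1) = cntw w' true (b : ℕ) + 1 := by
      rw [cntw_succ, if_pos hwb]
    have hb3 := cntw_total w' ((b : ℕ) + 1)
    have hb4 := cntw_total w' (b : ℕ)
    rw [Fin.lt_def]
    by_contra hc
    push_neg at hc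
    -- b ≤ a; b ≠ a since rows differ
    have hne : (a : ℕ) ≠ (b : ℕ) := by
      intro h
      rw [h] at hwa
      rw [hwa] at hwb
      exact Bool.false_ne_true hwb
    have hba : (b : ℕ) + 1 ≤ (a : ℕ) := by omega
    have := cntw_mono w' false hba
    have hb5 : cntw w' false ((b : ℕ) + 1) = cntw w' false (b : ℕ) := by
      rw [cntw_succ, if_neg (by simp [hwb])]
      omega
    omega

end Tableau3

section Tableau4

variable {n k : ℕ}
  {pos : Fin (skewCells [n - k, k] []).card → ↥(skewCells [n - k, k] [])}

lemma mem_desSet (hkn : 2 * k ≤ n) (v : ℕ) :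
    v ∈ desSet [n - k, k] [] pos ↔
      1 ≤ v ∧ v < (skewCells [n - k, k] []).card ∧ Des (wrow n k pos) v := by
  unfold desSet Des
  simp only [Finset.mem_filter, Finset.mem_range]
  constructor
  · rintro ⟨hv, a, b, ha, hb, hlt⟩
    have hrowa : ((pos a : ℕ × ℕ)).1 = 0 := by
      rcases row_cases (pos := pos) hkn a with ⟨h1, -⟩ | ⟨h1, -⟩
      · exact h1
      · exfalso
        rcases row_cases (pos := pos) hkn b with ⟨h2, -⟩ | ⟨h2, -⟩ <;> omega
    have hrowb : ((pos b : ℕ × ℕ)).1 = 1 := by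
      rcases row_cases (pos := pos) hkn b with ⟨h2, -⟩ | ⟨h2, -⟩ <;> omega
    refine ⟨by omega, hv, ?_, ?_⟩
    · have e : (a : ℕ) = v - 1 := by omega
      rw [← e, wrow_val, hrowa]
      simp
    · rw [← hb, wrow_val, hrowb]
      simp
  · rintro ⟨h1, h2, hw1, hw2⟩
    refine ⟨h2, ⟨v - 1, by omega⟩, ⟨v, h2⟩, by simp; omega, rfl, ?_⟩
    have ha : wrow n k pos ((⟨v - 1, by omega⟩ : Fin (skewCells [n - k, k] []).card) : ℕ)
        = false := hw1
    have hb : wrow n k pos ((⟨v, h2⟩ : Fin (skewCells [n - k, k] []).card) : ℕ) = true := hw2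
    rw [wrow_val] at ha hb
    simp only [decide_eq_true_eq, decide_eq_false_iff_not] at ha hb
    rcases row_cases (pos := pos) hkn (⟨v - 1, by omega⟩ : Fin (skewCells [n - k, k] []).card)
      with ⟨hA, -⟩ | ⟨hA, -⟩ <;>
      rcases row_cases (pos := pos) hkn (⟨v, h2⟩ : Fin (skewCells [n - k, k] []).card)
        with ⟨hB, -⟩ | ⟨hB, -⟩ <;> omega

lemma desSet_Phi (hkn : 2 * k ≤ n) (hS : IsSYT [n - k, k] [] pos) :
    desSet [n - k, k] [] (Phi n k pos hkn hS)
      = (desSet [n - k, k] [] pos).image (fun v => (skewCells [n - k, k] []).card - v) := by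
  ext u
  rw [mem_desSet hkn, Finset.mem_image]
  constructor
  · rintro ⟨hu1, hu2, hDes⟩
    have hDes' : Des (Tw (wrow n k pos) (skewCells [n - k, k] []).card) u := by
      unfold Des at hDes ⊢
      rwa [wrow_Phi hkn hS (u - 1) (by omega), wrow_Phi hkn hS u hu2] at hDes
    have hD := (des_Tw (ballot_wrow hkn hS) hu1 (by omega)).1 hDes'
    refine ⟨(skewCells [n - k, k] []).card - u, (mem_desSet hkn _).2 ⟨by omega, by omega, hD⟩,
      by omega⟩
  · rintro ⟨v, hv, rfl⟩
    rw [mem_desSet hkn] at hv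
    obtain ⟨hv1, hv2, hDes⟩ := hv
    refine ⟨by omega, by omega, ?_⟩
    have hD : Des (Tw (wrow n k pos) (skewCells [n - k, k] []).card)
        ((skewCells [n - k, k] []).card - v) := by
      apply (des_Tw (ballot_wrow hkn hS) (by omega) (by omega)).2
      have e : (skewCells [n - k, k] []).card - ((skewCells [n - k, k] []).card - v) = v := by
        omega
      rw [e]
      exact hDes
    unfold Des at hD ⊢
    rwa [wrow_Phi hkn hS ((skewCells [n - k, k] []).card - v - 1) (by omega),
      wrow_Phi hkn hS ((skewCells [n - k, k] []).card - v) (by omega)]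

lemma des_injOn (hkn : 2 * k ≤ n) :
    Set.InjOn (fun v => (skewCells [n - k, k] []).card - v) (desSet [n - k, k] [] pos) := by
  intro x hx y hy hxy
  have hx' := (mem_desSet hkn x).1 hx
  have hy' := (mem_desSet hkn y).1 hy
  simp only at hxy
  omega

lemma desStat_Phi (hkn : 2 * k ≤ n) (hS : IsSYT [n - k, k] [] pos) :
    desStat [n - k, k] [] (Phi n k pos hkn hS) = desStat [n - k, k] [] pos := by
  unfold desStat
  rw [desSet_Phi hkn hS]
  exact Finset.card_image_of_injOn (des_injOn hkn)

lemma majStat_Phi (hkn : 2 * k ≤ n) (hS : IsSYT [n - k, k] [] pos) :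
    majStat [n - k, k] [] (Phi n k pos hkn hS) + majStat [n - k, k] [] pos
      = desStat [n - k, k] [] pos * n := by
  unfold majStat desStat
  rw [desSet_Phi hkn hS, Finset.sum_image (des_injOn hkn), ← Finset.sum_add_distrib]
  rw [Finset.sum_congr rfl (fun v hv => show id ((skewCells [n - k, k] []).card - v) + id v
      = (skewCells [n - k, k] []).card by
    have := (mem_desSet (pos := pos) hkn v).1 hv
    simp only [id]
    omega)]
  rw [Finset.sum_const, smul_eq_mul, cells_card hkn]

lemma Phi_invol (hkn : 2 * k ≤ n) (hS : IsSYT [n - k, k] [] pos)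
    (hS2 : IsSYT [n - k, k] [] (Phi n k pos hkn hS)) :
    Phi n k (Phi n k pos hkn hS) hkn hS2 = pos := by
  have ht : ∀ l < (skewCells [n - k, k] []).card,
      Tw (wrow n k (Phi n k pos hkn hS)) (skewCells [n - k, k] []).card l
        = wrow n k pos l := by
    intro l hl
    rw [Tw_congr (wrow_Phi hkn hS) l]
    exact Tw_invol (ballot_wrow hkn hS) l hl
  funext j
  apply Subtype.ext
  have hval : (Phi n k (Phi n k pos hkn hS) hkn hS2 j : ℕ × ℕ)
      = ((if Tw (wrow n k (Phi n k pos hkn hS)) (skewCells [n - k, k] []).card (j : ℕ)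
            then 1 else 0),
         cntw (Tw (wrow n k (Phi n k pos hkn hS)) (skewCells [n - k, k] []).card)
           (Tw (wrow n k (Phi n k pos hkn hS)) (skewCells [n - k, k] []).card (j : ℕ))
           (j : ℕ)) := rfl
  rw [hval]
  apply Prod.ext
  · show (if Tw (wrow n k (Phi n k pos hkn hS)) (skewCells [n - k, k] []).card (j : ℕ)
        then 1 else 0) = _
    rw [ht (j : ℕ) j.isLt]
    exact (row_of_wrow hkn j).symm
  · show cntw _ _ _ = _
    rw [cntw_congr (fun l hl => ht l (lt_trans hl j.isLt)), ht (j : ℕ) j.isLt]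
    exact (col_eq_cnt hkn hS j).symm

end Tableau4

/-- For integers `i ≥ 1`, `i ≤ k`, `2k ≤ n`, the polynomial
`f_{(n-k,k),i}(q)` is symmetric with central degree `ni/2`; that is,
`q^{ni} · f_{(n-k,k),i}(1/q) = f_{(n-k,k),i}(q)`, expressed coefficientwise:
the coefficient of `q^s` equals that of `q^{ni-s}` for `s ≤ ni`, and all
coefficients above degree `ni` vanish. -/
theorem stmt4 (n k i : ℕ) (hi : 1 ≤ i) (hik : i ≤ k) (hkn : 2 * k ≤ n) :
    (∀ s : ℕ, s ≤ n * i →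
      (fPoly [n - k, k] i).coeff s = (fPoly [n - k, k] i).coeff (n * i - s)) ∧
    (∀ s : ℕ, n * i < s → (fPoly [n - k, k] i).coeff s = 0) := by
  classical
  -- the coefficient of `q^s` counts tableaux with `i` descents and major index `s`
  have hcoeff : ∀ s : ℕ, (fPoly [n - k, k] i).coeff s
      = ((((SYTs [n - k, k] []).filter (fun pos => desStat [n - k, k] [] pos = i)).filter
          (fun pos => s = majStat [n - k, k] [] pos)).card : ℤ) := by
    intro s
    rw [fPoly, fSkew, Polynomial.finset_sum_coeff]
    rw [Finset.sum_congr rfl (fun pos _ => Polynomial.coeff_X_pow _ _)]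
    rw [Finset.sum_boole]
  -- membership unfolding
  have hmem : ∀ (pos : Fin (skewCells [n - k, k] []).card → ↥(skewCells [n - k, k] []))
      (s : ℕ),
      pos ∈ ((SYTs [n - k, k] []).filter (fun p => desStat [n - k, k] [] p = i)).filter
          (fun p => s = majStat [n - k, k] [] p) ↔
        IsSYT [n - k, k] [] pos ∧ desStat [n - k, k] [] pos = i
          ∧ s = majStat [n - k, k] [] pos := by
    intro pos s
    simp only [SYTs, Finset.mem_filter, Finset.mem_univ, true_and]
    tauto
  -- the key involution identity
  have hmaj : ∀ (pos : Fin (skewCells [n - k, k] []).card → ↥(skewCells [n - k, k] []))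
      (hS : IsSYT [n - k, k] [] pos), desStat [n - k, k] [] pos = i →
      majStat [n - k, k] [] (Phi n k pos hkn hS) + majStat [n - k, k] [] pos = n * i := by
    intro pos hS hdes
    rw [majStat_Phi hkn hS, hdes, Nat.mul_comm]
  constructor
  · intro s hs
    rw [hcoeff s, hcoeff (n * i - s)]
    congr 1
    refine Finset.card_bij'
      (fun pos hpos => Phi n k pos hkn (((hmem pos s).1 hpos).1))
      (fun pos hpos => Phi n k pos hkn (((hmem pos (n * i - s)).1 hpos).1))
      ?_ ?_ ?_ ?_
    · intro pos hpos
      obtain ⟨hS, hdes, hmj⟩ := (hmem pos s).1 hpos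
      rw [hmem]
      refine ⟨Phi_SYT hkn hS, ?_, ?_⟩
      · rw [desStat_Phi hkn hS, hdes]
      · show n * i - s = majStat [n - k, k] [] (Phi n k pos hkn hS)
        have := hmaj pos hS hdes
        omega
    · intro pos hpos
      obtain ⟨hS, hdes, hmj⟩ := (hmem pos (n * i - s)).1 hpos
      rw [hmem]
      refine ⟨Phi_SYT hkn hS, ?_, ?_⟩
      · rw [desStat_Phi hkn hS, hdes]
      · show s = majStat [n - k, k] [] (Phi n k pos hkn hS)
        have := hmaj pos hS hdes
        omega
    · intro pos hpos
      exact Phi_invol hkn _ _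
    · intro pos hpos
      exact Phi_invol hkn _ _
  · intro s hs
    rw [hcoeff s]
    norm_cast
    rw [Finset.card_eq_zero]
    apply Finset.eq_empty_of_forall_notMem
    intro pos hpos
    obtain ⟨hS, hdes, hmj⟩ := (hmem pos s).1 hpos
    have := hmaj pos hS hdes
    omega
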